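/- The tripartite family of effects {R₀,...,R₇} defined by R₀(001|000) = R₁(110|000) = R₂(000|100) = R₃(100|100) = R₄(101|010) = R₅(111|010) = R₆(010|001) = R₇(011|001) = 1 (all other components zero) is a valid measurement in box world: for every tripartite no-signalling normalized nonnegative state P(abc|xyz) with binary inputs and outputs on each of three subsystems, ∑_{r=0}^{7} R_r · P = 1, and each R_r · P ≥ 0. -/

import Mathlib

/-- The data of the eight tripartite effects: `R_r(abc|xyz) = 1` exactly at
the listed component `((a,b,c),(x,y,z))`, and `0` elsewhere. -/
def Rdata : Fin 8 → (Fin 2 × Fin 2 × Fin 2) × (Fin 2 × Fin 2 × Fin 2) :=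
  ![((0,0,1),(0,0,0)), ((1,1,0),(0,0,0)),
    ((0,0,0),(1,0,0)), ((1,0,0),(1,0,0)),
    ((1,0,1),(0,1,0)), ((1,1,1),(0,1,0)),
    ((0,1,0),(0,0,1)), ((0,1,1),(0,0,1))]

/-- The effect arrays `R_r`. -/
noncomputable def Reff (r : Fin 8) (a b c x y z : Fin 2) : ℝ :=
  if ((a, b, c), (x, y, z)) = Rdata r then 1 else 0

/-- The family `{R₀,…,R₇}` is a valid tripartite measurement in box world:
on every tripartite no-signalling normalized nonnegative state, each outcome
probability is nonnegative and the outcome probabilities sum to 1. -/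
theorem tripartite_measurement_valid
    (P : Fin 2 → Fin 2 → Fin 2 → Fin 2 → Fin 2 → Fin 2 → ℝ)
    (hpos : ∀ a b c x y z, 0 ≤ P a b c x y z)
    (hnorm : ∀ x y z, ∑ a, ∑ b, ∑ c, P a b c x y z = 1)
    (hNS1 : ∀ b c x x' y z, ∑ a, P a b c x y z = ∑ a, P a b c x' y z)
    (hNS2 : ∀ a c x y y' z, ∑ b, P a b c x y z = ∑ b, P a b c x y' z)
    (hNS3 : ∀ a b x y z z', ∑ c, P a b c x y z = ∑ c, P a b c x y z') :
    (∀ r : Fin 8,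
      0 ≤ ∑ x, ∑ y, ∑ z, ∑ a, ∑ b, ∑ c, Reff r a b c x y z * P a b c x y z) ∧
    (∑ r : Fin 8,
      ∑ x, ∑ y, ∑ z, ∑ a, ∑ b, ∑ c, Reff r a b c x y z * P a b c x y z) = 1 := by
  have h1 := hNS1 0 0 1 0 0 0
  have h2 := hNS2 1 1 0 1 0 0
  have h3 := hNS3 0 1 0 0 1 0
  have hn := hnorm 0 0 0
  simp only [Fin.sum_univ_two] at h1 h2 h3 hn
  constructor
  · intro r
    refine Finset.sum_nonneg fun x _ => Finset.sum_nonneg fun y _ =>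
      Finset.sum_nonneg fun z _ => Finset.sum_nonneg fun a _ =>
      Finset.sum_nonneg fun b _ => Finset.sum_nonneg fun c _ => ?_
    exact mul_nonneg (by unfold Reff; split <;> norm_num) (hpos a b c x y z)
  · simp only [Fin.sum_univ_succ, Fin.sum_univ_zero, Reff, Rdata,
      Fin.sum_univ_two, Matrix.cons_val_succ, Matrix.cons_val_zero]
    norm_num [Prod.ext_iff]
    linarith
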